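/- Let V be a real inner product space, and let a : V × V → ℝ be a symmetric positive semidefinite bilinear form. Let τ > 0, θ ∈ [1/2, 1], N ≥ 1, and let η⁰, …, η^N and r¹, …, r^N in V satisfy, for each n = 1, …, N and every v ∈ V, ⟪(ηⁿ - η^{n-1})/τ, v⟫ + a(θ ηⁿ + (1-θ) η^{n-1}, v) = ⟪rⁿ, v⟫. Then a(η^N, η^N) ≤ a(η⁰, η⁰) + τ Σ_{j=1}^{N} ‖r^j‖². -/

import Mathlib

open scoped RealInnerProductSpace

/-- Energy-norm estimate for the θ-scheme error recursion, `θ ∈ [1/2, 1]`: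
`a(η^N, η^N) ≤ a(η⁰, η⁰) + τ Σ_{j=1}^N ‖r^j‖²`. -/
theorem theta_scheme_energy_estimate
    {V : Type*} [NormedAddCommGroup V] [InnerProductSpace ℝ V]
    (a : V →ₗ[ℝ] V →ₗ[ℝ] ℝ)
    (hsym : ∀ x y : V, a x y = a y x)
    (hpos : ∀ v : V, 0 ≤ a v v)
    (τ θ : ℝ) (hτ : 0 < τ) (hθ : θ ∈ Set.Icc (1 / 2 : ℝ) 1)
    (N : ℕ) (hN : 1 ≤ N) (η r : ℕ → V)
    (hscheme : ∀ n, 1 ≤ n → n ≤ N → ∀ v : V,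
      ⟪(1 / τ) • (η n - η (n - 1)), v⟫ + a (θ • η n + (1 - θ) • η (n - 1)) v
        = ⟪r n, v⟫) :
    a (η N) (η N) ≤ a (η 0) (η 0) + τ * ∑ j ∈ Finset.Icc 1 N, ‖r j‖ ^ 2 := by
  have key : ∀ n, 1 ≤ n → n ≤ N →
      a (η n) (η n) ≤ a (η (n - 1)) (η (n - 1)) + τ * ‖r n‖ ^ 2 := by
    intro n h1 h2
    set x := η n with hx
    set y := η (n - 1) with hy
    set d := x - y with hd
    have heq := hscheme n h1 h2 d
    rw [real_inner_smul_left, real_inner_self_eq_norm_sq] at heq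
    have hexp : a (θ • x + (1 - θ) • y) d
        = θ * a x x + (θ - 1) * a y y + (1 - 2 * θ) * a x y := by
      simp only [hd, map_add, map_smul, map_sub, LinearMap.add_apply,
        LinearMap.smul_apply, LinearMap.sub_apply, smul_eq_mul]
      rw [hsym y x]; ring
    have hddexp : a d d = a x x - 2 * a x y + a y y := by
      simp only [hd, map_sub, LinearMap.sub_apply]
      rw [hsym y x]; ring
    have hdd : 0 ≤ a x x - 2 * a x y + a y y := hddexp ▸ hpos d
    have hcs : ⟪r n, d⟫ ≤ ‖r n‖ * ‖d‖ := real_inner_le_norm _ _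
    rw [hexp] at heq
    have hθ1 := hθ.1
    have hθ2 := hθ.2
    -- coercivity of θ-average
    have hcoer : a x x - a y y ≤
        2 * (θ * a x x + (θ - 1) * a y y + (1 - 2 * θ) * a x y) := by
      nlinarith [mul_nonneg (by linarith : (0:ℝ) ≤ 2 * θ - 1) hdd]
    -- multiply the equation by τ
    have hτ' : τ ≠ 0 := ne_of_gt hτ
    have heqτ : ‖d‖ ^ 2 + τ * (θ * a x x + (θ - 1) * a y y + (1 - 2 * θ) * a x y)
        = τ * ⟪r n, d⟫ := by
      have := congrArg (fun z => τ * z) heq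
      field_simp at this ⊢
      linarith [this]
    have hyoung : 2 * (τ * (‖r n‖ * ‖d‖)) ≤ τ ^ 2 * ‖r n‖ ^ 2 + ‖d‖ ^ 2 := by
      nlinarith [sq_nonneg (τ * ‖r n‖ - ‖d‖)]
    have hτineq : τ * (a x x - a y y) ≤ τ ^ 2 * ‖r n‖ ^ 2 := by
      nlinarith [mul_le_mul_of_nonneg_left hcs (le_of_lt hτ),
        mul_le_mul_of_nonneg_left hcoer (le_of_lt hτ), sq_nonneg ‖d‖]
    nlinarith [hτineq, hτ]
  have main : ∀ m, m ≤ N →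
      a (η m) (η m) ≤ a (η 0) (η 0) + τ * ∑ j ∈ Finset.Icc 1 m, ‖r j‖ ^ 2 := by
    intro m
    induction m with
    | zero => simp
    | succ k ih =>
      intro hk
      have hk' : k ≤ N := Nat.le_of_succ_le hk
      have hstep := key (k + 1) (Nat.succ_le_succ (Nat.zero_le k)) hk
      simp only [Nat.add_sub_cancel] at hstep
      have hsum : ∑ j ∈ Finset.Icc 1 (k + 1), ‖r j‖ ^ 2
          = (∑ j ∈ Finset.Icc 1 k, ‖r j‖ ^ 2) + ‖r (k + 1)‖ ^ 2 := by
        rw [Finset.sum_Icc_succ_top (Nat.succ_le_succ (Nat.zero_le k))]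
      rw [hsum]
      have := ih hk'
      nlinarith
  exact main N le_rfl
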